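/- arXiv:1406.0594 — 3 statements merged into one kernel-verified Lean document; each statement's English description precedes it below -/
import Mathlib

section
/- (Whittaker–Kotel'nikov–Shannon) If f(t) = (1/√(2π)) ∫_{-σ}^{σ} e^{ixt} g(x) dx with g ∈ L²(-σ,σ), then for every t ∈ ℝ, f(t) = Σ_{k∈ℤ} f(kπ/σ) · sinc(σt - kπ), where sinc(u) = sin(u)/u for u ≠ 0 and sinc(0) = 1, and the series converges absolutely. -/
open MeasureTheory Complex Real AddCircle

noncomputable def sinc (u : ℝ) : ℝ := if u = 0 then 1 else Real.sin u / u

lemma sinc_neg (u : ℝ) : _root_.sinc (-u) = _root_.sinc u := by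
  unfold _root_.sinc
  rcases eq_or_ne u 0 with h | h
  · simp [h]
  · rw [if_neg (neg_ne_zero.mpr h), if_neg h, Real.sin_neg, neg_div_neg_eq]

lemma integral_exp_I_mul (σ c : ℝ) (hσ : 0 < σ) :
    ∫ x in (-σ)..σ, Complex.exp (Complex.I * c * x) = 2 * σ * _root_.sinc (σ * c) := by
  rcases eq_or_ne c 0 with h | h
  · { simp [h, _root_.sinc]; ring }
  · have hc : Complex.I * (c : ℂ) ≠ 0 := by
      simp [Complex.I_ne_zero, Complex.ofReal_eq_zero, h]
    rw [integral_exp_mul_complex hc]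
    have hσc : σ * c ≠ 0 := mul_ne_zero hσ.ne' h
    rw [_root_.sinc, if_neg hσc]
    have h1 : Complex.I * c * (σ : ℝ) = ((σ * c : ℝ) : ℂ) * Complex.I := by push_cast; ring
    have h2 : Complex.I * c * ((-σ : ℝ) : ℂ) = (-((σ * c : ℝ) : ℂ)) * Complex.I := by
      push_cast; ring
    rw [h1, h2, Complex.exp_mul_I, Complex.exp_mul_I, Complex.cos_neg, Complex.sin_neg]
    have hσ' : (σ : ℂ) ≠ 0 := Complex.ofReal_ne_zero.mpr hσ.ne'
    have hc' : (c : ℂ) ≠ 0 := Complex.ofReal_ne_zero.mpr h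
    push_cast [Complex.ofReal_sin]
    field_simp
    ring

lemma addCircle_intervalIntegral_eq_haar (T : ℝ) [hT : Fact (0 < T)] (a : ℝ)
    (F : AddCircle T → ℂ) :
    ∫ x in a..a + T, F x = T • ∫ z, F z ∂haarAddCircle := by
  rw [AddCircle.intervalIntegral_preimage T a F, AddCircle.volume_eq_smul_haarAddCircle,
    integral_smul_measure, ENNReal.toReal_ofReal hT.out.le]

lemma liftIoc_stronglyMeasurable {T : ℝ} [hT : Fact (0 < T)] (a : ℝ) {F : ℝ → ℂ}
    (hF : StronglyMeasurable F) : StronglyMeasurable (AddCircle.liftIoc T a F) :=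
  (hF.comp_measurable measurable_subtype_coe).comp_measurable
    (AddCircle.measurableEquivIoc T a).measurable

lemma liftIoc_memLp {T : ℝ} [hT : Fact (0 < T)] (a : ℝ) {F : ℝ → ℂ}
    (hFm : StronglyMeasurable F)
    (hF : MemLp F 2 (volume.restrict (Set.Ioc a (a + T)))) :
    MemLp (AddCircle.liftIoc T a F) 2 (haarAddCircle : Measure (AddCircle T)) := by
  have hvol : MemLp (AddCircle.liftIoc T a F) 2 (volume : Measure (AddCircle T)) := by
    rw [← (AddCircle.measurePreserving_mk T a).map_eq,
      memLp_map_measure_iff (liftIoc_stronglyMeasurable a hFm).aestronglyMeasurable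
        AddCircle.measurable_mk'.aemeasurable]
    refine hF.ae_eq ?_
    filter_upwards [ae_restrict_mem measurableSet_Ioc] with x hx
    exact (AddCircle.liftIoc_coe_apply hx).symm
  have : (haarAddCircle : Measure (AddCircle T)) = (ENNReal.ofReal T)⁻¹ • volume := by
    rw [AddCircle.volume_eq_smul_haarAddCircle, smul_smul,
      ENNReal.inv_mul_cancel (by simpa using hT.out) ENNReal.ofReal_ne_top, one_smul]
  rw [this]
  exact hvol.smul_measure (by simp [hT.out])

lemma fourierCoeff_toLp' {T : ℝ} [hT : Fact (0 < T)] {F : AddCircle T → ℂ}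
    (hF : MemLp F 2 (haarAddCircle : Measure (AddCircle T))) (n : ℤ) :
    fourierCoeff (↑(hF.toLp F) : AddCircle T → ℂ) n = fourierCoeff F n := by
  refine integral_congr_ae ?_
  filter_upwards [hF.coeFn_toLp] with z hz
  rw [hz]

/-- **Whittaker–Kotel'nikov–Shannon sampling theorem** for Paley–Wiener
functions `f(t) = (1/√(2π)) ∫_{-σ}^{σ} e^{ixt} g(x) dx`. -/
theorem wks_sampling
    (σ : ℝ) (hσ : 0 < σ) (g : ℝ → ℂ)
    (hg : MemLp g 2 (volume.restrict (Set.Ioc (-σ) σ)))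
    (f : ℝ → ℂ)
    (hf : ∀ t : ℝ, f t =
      (1 / Real.sqrt (2 * Real.pi)) *
        ∫ x in (-σ)..σ, Complex.exp (Complex.I * x * t) * g x) :
    ∀ t : ℝ,
      Summable (fun k : ℤ => ‖f (k * Real.pi / σ) * (_root_.sinc (σ * t - k * Real.pi) : ℂ)‖) ∧
      HasSum (fun k : ℤ => f (k * Real.pi / σ) * (_root_.sinc (σ * t - k * Real.pi) : ℂ)) (f t) := by
  intro t
  haveI : Fact (0 < 2 * σ) := ⟨by linarith⟩
  have hσ' : σ ≠ 0 := hσ.ne'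
  have hσc : (σ : ℂ) ≠ 0 := Complex.ofReal_ne_zero.mpr hσ'
  have hside : -σ + 2 * σ = σ := by ring
  have hsqpos : 0 < Real.sqrt (2 * π) := Real.sqrt_pos.mpr (by positivity)
  have hsq : Real.sqrt (2 * π) ≠ 0 := hsqpos.ne'
  have hsq2c : ((Real.sqrt 2 : ℝ) : ℂ) ≠ 0 :=
    Complex.ofReal_ne_zero.mpr (Real.sqrt_ne_zero'.mpr two_pos)
  have hsqπc : ((Real.sqrt π : ℝ) : ℂ) ≠ 0 :=
    Complex.ofReal_ne_zero.mpr (Real.sqrt_ne_zero'.mpr Real.pi_pos)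
  set g' := hg.1.mk g with hg'def
  have hg'sm : StronglyMeasurable g' := hg.1.stronglyMeasurable_mk
  have hgg' : g =ᵐ[volume.restrict (Set.Ioc (-σ) σ)] g' := hg.1.ae_eq_mk
  set G : AddCircle (2 * σ) → ℂ := AddCircle.liftIoc (2 * σ) (-σ) g' with hGdef
  set h : ℝ → ℂ := fun x => Complex.exp (-(Complex.I * x * t)) with hhdef
  set H : AddCircle (2 * σ) → ℂ := AddCircle.liftIoc (2 * σ) (-σ) h with hHdef
  have hGmem : MemLp G 2 (haarAddCircle : Measure (AddCircle (2 * σ))) := by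
    refine liftIoc_memLp (-σ) hg'sm ?_
    rw [hside]
    exact hg.ae_eq hgg'
  have hHsm : StronglyMeasurable H :=
    liftIoc_stronglyMeasurable (-σ) (Continuous.stronglyMeasurable (by fun_prop))
  have hHmem : MemLp H 2 (haarAddCircle : Measure (AddCircle (2 * σ))) := by
    refine MemLp.of_bound hHsm.aestronglyMeasurable 1 (ae_of_all _ fun z => ?_)
    show ‖h ((AddCircle.equivIoc (2 * σ) (-σ)) z : ℝ)‖ ≤ 1
    simp [hhdef, Complex.norm_exp]
  set Glp := hGmem.toLp G with hGL
  set Hlp := hHmem.toLp H with hHL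
  set C : ℂ := (Real.sqrt (2 * π) : ℂ) / (2 * σ) with hCdef
  have hC : C ≠ 0 := by
    rw [hCdef]
    apply div_ne_zero
    · exact_mod_cast Complex.ofReal_ne_zero.mpr hsq
    · push_cast
      intro hcon
      apply hσc
      linear_combination hcon / 2
  -- Fourier coefficients of H
  have hcH : ∀ n : ℤ, fourierCoeff H n = ((_root_.sinc (σ * t + n * π) : ℝ) : ℂ) := by
    intro n
    rw [fourierCoeff_eq_intervalIntegral H n (-σ), hside]
    have hI : ∫ x in (-σ)..σ, @fourier (2 * σ) (-n) x • H ↑x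
        = ∫ x in (-σ)..σ, Complex.exp (Complex.I * ((-(n * π) / σ - t : ℝ)) * x) := by
      rw [intervalIntegral.integral_of_le (by linarith),
        intervalIntegral.integral_of_le (by linarith)]
      refine setIntegral_congr_fun measurableSet_Ioc fun x hx => ?_
      have hx' : x ∈ Set.Ioc (-σ) (-σ + 2 * σ) := by rwa [hside]
      rw [hHdef, AddCircle.liftIoc_coe_apply hx', fourier_coe_apply, hhdef]
      rw [smul_eq_mul, ← Complex.exp_add]
      congr 1
      push_cast
      field_simp
      ring
    rw [hI, integral_exp_I_mul σ _ hσ,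
      show σ * (-(n * π) / σ - t) = -(σ * t + n * π) by field_simp; ring, _root_.sinc_neg]
    rw [Complex.real_smul]
    push_cast
    field_simp
  -- Fourier coefficients of G
  have hcG : ∀ n : ℤ, fourierCoeff G n = C * f (-(n * π) / σ) := by
    intro n
    rw [fourierCoeff_eq_intervalIntegral G n (-σ), hside]
    have hI : ∫ x in (-σ)..σ, @fourier (2 * σ) (-n) x • G ↑x
        = ∫ x in (-σ)..σ, Complex.exp (Complex.I * x * ((-(n * π) / σ : ℝ))) * g x := by
      rw [intervalIntegral.integral_of_le (by linarith),
        intervalIntegral.integral_of_le (by linarith)]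
      refine integral_congr_ae ?_
      filter_upwards [hgg', ae_restrict_mem measurableSet_Ioc] with x hgx hx
      have hx' : x ∈ Set.Ioc (-σ) (-σ + 2 * σ) := by rwa [hside]
      rw [hGdef, AddCircle.liftIoc_coe_apply hx', fourier_coe_apply, smul_eq_mul, ← hgx]
      congr 1
      push_cast
      field_simp
    rw [hI, hf (-(n * π) / σ), Complex.real_smul, hCdef, ← mul_assoc]
    congr 1
    have hsqc : ((Real.sqrt (2 * π) : ℝ) : ℂ) ≠ 0 := Complex.ofReal_ne_zero.mpr hsq
    push_cast
    field_simp
  -- inner product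
  have hinner : (inner ℂ Hlp Glp : ℂ) = C * f t := by
    rw [MeasureTheory.L2.inner_def]
    have h1 : ∫ z, (inner ℂ (Hlp z) (Glp z) : ℂ) ∂haarAddCircle
        = ∫ z, (starRingEnd ℂ) (H z) * G z ∂haarAddCircle := by
      refine integral_congr_ae ?_
      filter_upwards [hGmem.coeFn_toLp, hHmem.coeFn_toLp] with z hz1 hz2
      rw [RCLike.inner_apply, hGL, hHL, hz1, hz2, mul_comm]
    rw [h1]
    have h2 := addCircle_intervalIntegral_eq_haar (2 * σ) (-σ)
      (fun z => (starRingEnd ℂ) (H z) * G z)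
    rw [hside] at h2
    have h3 : ∫ x in (-σ)..σ, (starRingEnd ℂ) (H ↑x) * G ↑x
        = ∫ x in (-σ)..σ, Complex.exp (Complex.I * x * t) * g x := by
      rw [intervalIntegral.integral_of_le (by linarith),
        intervalIntegral.integral_of_le (by linarith)]
      refine integral_congr_ae ?_
      filter_upwards [hgg', ae_restrict_mem measurableSet_Ioc] with x hgx hx
      have hx' : x ∈ Set.Ioc (-σ) (-σ + 2 * σ) := by rwa [hside]
      rw [hGdef, hHdef, AddCircle.liftIoc_coe_apply hx', AddCircle.liftIoc_coe_apply hx',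
        hhdef, ← hgx, ← Complex.exp_conj]
      congr 2
      simp [Complex.conj_ofReal]
    have hsqc : ((Real.sqrt (2 * π) : ℝ) : ℂ) ≠ 0 := Complex.ofReal_ne_zero.mpr hsq
    have hft : ∫ x in (-σ)..σ, Complex.exp (Complex.I * x * t) * g x
        = ((Real.sqrt (2 * π) : ℝ) : ℂ) * f t := by
      rw [hf t, ← mul_assoc, mul_one_div, div_self hsqc, one_mul]
    rw [h3, hft, Complex.real_smul, Complex.ofReal_mul, Complex.ofReal_ofNat] at h2
    have h2σ : (2 * (σ : ℂ)) ≠ 0 := by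
      intro hcon
      exact hσc (by linear_combination hcon / 2)
    rw [hCdef, div_mul_eq_mul_div, eq_comm, div_eq_iff h2σ]
    linear_combination h2
  -- key Parseval-type sum
  have KEY : HasSum (fun n : ℤ =>
      ((_root_.sinc (σ * t + n * π) : ℝ) : ℂ) * (C * f (-(n * π) / σ))) (C * f t) := by
    rw [← hinner]
    have hs := fourierBasis.hasSum_inner_mul_inner Hlp Glp
    have he : (fun n : ℤ => (inner ℂ Hlp (fourierBasis n) : ℂ) * inner ℂ (fourierBasis n) Glp)
        = fun n : ℤ => ((_root_.sinc (σ * t + n * π) : ℝ) : ℂ) * (C * f (-(n * π) / σ)) := by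
      funext n
      have hG1 : (inner ℂ (fourierBasis n) Glp : ℂ) = fourierCoeff G n := by
        rw [← HilbertBasis.repr_apply_apply, fourierBasis_repr, hGL, fourierCoeff_toLp' hGmem]
      have hH1 : (inner ℂ Hlp (fourierBasis n) : ℂ)
          = (starRingEnd ℂ) (fourierCoeff H n) := by
        rw [← inner_conj_symm, ← HilbertBasis.repr_apply_apply, fourierBasis_repr, hHL,
          fourierCoeff_toLp' hHmem]
      rw [hG1, hH1, hcH n, hcG n, Complex.conj_ofReal]
    rw [← he]
    exact hs
  have KEY2 : HasSum
      (fun n : ℤ => f (-(n * π) / σ) * ((_root_.sinc (σ * t + n * π) : ℝ) : ℂ)) (f t) := by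
    have h := KEY.mul_left C⁻¹
    rw [inv_mul_cancel_left₀ hC] at h
    have hfun : (fun n : ℤ => C⁻¹ * (((_root_.sinc (σ * t + n * π) : ℝ) : ℂ)
        * (C * f (-(n * π) / σ))))
        = fun n : ℤ => f (-(n * π) / σ) * ((_root_.sinc (σ * t + n * π) : ℝ) : ℂ) := by
      funext n
      field_simp
    rwa [hfun] at h
  -- summability of squares of Fourier coefficients
  have hsq2 : ∀ (F : AddCircle (2 * σ) → ℂ)
      (hF : MemLp F 2 (haarAddCircle : Measure (AddCircle (2 * σ)))),
      Summable (fun n : ℤ => ‖fourierCoeff F n‖ ^ 2) := by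
    intro F hF
    have hs := Memℓp.summable (p := 2) (by norm_num)
      (lp.memℓp (fourierBasis.repr (hF.toLp F)))
    simp_rw [fourierBasis_repr, fourierCoeff_toLp' hF] at hs
    have h2 : (ENNReal.toReal 2) = (2 : ℝ) := by norm_num
    rw [h2] at hs
    simp_rw [Real.rpow_two] at hs
    exact hs
  have haG : Summable (fun n : ℤ => ‖fourierCoeff G n‖ ^ 2) := hsq2 G hGmem
  have haH : Summable (fun n : ℤ => ‖fourierCoeff H n‖ ^ 2) := hsq2 H hHmem
  have hprod : Summable (fun n : ℤ => ‖fourierCoeff G n‖ * ‖fourierCoeff H n‖) := by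
    refine Summable.of_nonneg_of_le (fun n => by positivity) (fun n => ?_)
      ((haG.add haH).div_const 2)
    nlinarith [sq_nonneg (‖fourierCoeff G n‖ - ‖fourierCoeff H n‖)]
  constructor
  · -- summability of norms
    have hneg : Summable ((fun n : ℤ => ‖fourierCoeff G n‖ * ‖fourierCoeff H n‖)
        ∘ (Equiv.neg ℤ)) := (Equiv.neg ℤ).summable_iff.mpr hprod
    refine Summable.of_nonneg_of_le (fun k => norm_nonneg _) (fun k => ?_)
      (hneg.mul_left (‖C‖⁻¹))
    simp only [Function.comp_apply, Equiv.neg_apply]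
    rw [hcG (-k), hcH (-k),
      show -((((-k : ℤ) : ℝ)) * π) / σ = (k : ℝ) * π / σ by push_cast; ring,
      show σ * t + ((-k : ℤ) : ℝ) * π = σ * t - (k : ℝ) * π by push_cast; ring]
    have hCnorm : ‖C‖ ≠ 0 := norm_ne_zero_iff.mpr hC
    apply le_of_eq
    rw [norm_mul, norm_mul, mul_assoc ‖C‖, inv_mul_cancel_left₀ hCnorm]
  · -- the sampling series
    have hfun2 : ((fun k : ℤ => f ((k : ℝ) * π / σ) * ((_root_.sinc (σ * t - (k : ℝ) * π) : ℝ) : ℂ))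
        ∘ (Equiv.neg ℤ))
        = fun n : ℤ => f (-(n * π) / σ) * ((_root_.sinc (σ * t + n * π) : ℝ) : ℂ) := by
      funext n
      simp only [Function.comp_apply, Equiv.neg_apply]
      rw [show (((-n : ℤ) : ℝ)) * π / σ = -((n : ℝ) * π) / σ by push_cast; ring,
        show σ * t - (((-n : ℤ) : ℝ)) * π = σ * t + (n : ℝ) * π by push_cast; ring]
    have : HasSum ((fun k : ℤ => f ((k : ℝ) * π / σ)
        * ((_root_.sinc (σ * t - (k : ℝ) * π) : ℝ) : ℂ)) ∘ (Equiv.neg ℤ)) (f t) := by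
      rw [hfun2]
      exact KEY2
    exact (Equiv.neg ℤ).hasSum_iff.mp this
end

section
/- (Kramer's sampling theorem) Let I be a finite closed interval, K(x,t) a kernel with K(·,t) ∈ L²(I) for all t, and {t_k}_{k∈ℤ} real numbers such that {K(·,t_k)} is a complete orthogonal set in L²(I). If f(t) = ∫_I K(x,t) g(x) dx with g ∈ L²(I), then f(t) = Σ_k f(t_k) · (∫_I K(x,t) conj(K(x,t_k)) dx) / ‖K(·,t_k)‖²_{L²(I)} for all t, with the series converging in the sense of matching all partial sums from the orthogonal expansion of g. -/
open MeasureTheory Complex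
open scoped InnerProductSpace

private lemma inner_toLp_eq (μ : Measure ℝ) (f₁ f₂ : ℝ → ℂ) (h₁ : MemLp f₁ 2 μ)
    (h₂ : MemLp f₂ 2 μ) :
    ⟪h₁.toLp f₁, h₂.toLp f₂⟫_ℂ = ∫ x, (starRingEnd ℂ) (f₁ x) * f₂ x ∂μ := by
  rw [MeasureTheory.L2.inner_def]
  apply integral_congr_ae
  filter_upwards [h₁.coeFn_toLp, h₂.coeFn_toLp] with x hx hy
  rw [hx, hy, RCLike.inner_apply, mul_comm]

set_option maxHeartbeats 1000000 in
/-- **Kramer's sampling theorem.** -/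
theorem kramer_sampling
    (a b : ℝ) (hab : a < b)
    (K : ℝ → ℂ → ℂ)
    (hK : ∀ t : ℂ, MemLp (fun x => K x t) 2 (volume.restrict (Set.Ioc a b)))
    (tk : ℤ → ℝ)
    -- orthogonality of the family {K(·, t_k)}
    (horth : ∀ j k : ℤ, j ≠ k →
      ∫ x in a..b, K x (tk j) * (starRingEnd ℂ) (K x (tk k)) = 0)
    -- each member is nonzero
    (hnz : ∀ k : ℤ, 0 < ∫ x in a..b, ‖K x (tk k)‖ ^ 2)
    -- completeness of the family in L²(I)
    (hcomp : ∀ h : ℝ → ℂ, MemLp h 2 (volume.restrict (Set.Ioc a b)) →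
      (∀ k : ℤ, ∫ x in a..b, h x * (starRingEnd ℂ) (K x (tk k)) = 0) →
      h =ᵐ[volume.restrict (Set.Ioc a b)] 0)
    (g : ℝ → ℂ) (hg : MemLp g 2 (volume.restrict (Set.Ioc a b)))
    (f : ℂ → ℂ)
    (hf : ∀ t : ℂ, f t = ∫ x in a..b, K x t * g x) :
    ∀ t : ℂ,
      HasSum (fun k : ℤ =>
        f (tk k) * (∫ x in a..b, K x t * (starRingEnd ℂ) (K x (tk k))) /
          ((∫ x in a..b, ‖K x (tk k)‖ ^ 2 : ℝ) : ℂ)) (f t) := by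
  intro t
  set μ : Measure ℝ := volume.restrict (Set.Ioc a b) with hμ
  have hle : a ≤ b := hab.le
  have hint : ∀ F : ℝ → ℂ, (∫ x in a..b, F x) = ∫ x, F x ∂μ := fun F =>
    intervalIntegral.integral_of_le hle
  have hintR : ∀ F : ℝ → ℝ, (∫ x in a..b, F x) = ∫ x, F x ∂μ := fun F =>
    intervalIntegral.integral_of_le hle
  -- the L² elements
  set V : ℤ → Lp ℂ 2 μ := fun k => (hK (tk k)).toLp _ with hV
  set Vt : Lp ℂ 2 μ := (hK t).toLp _ with hVt
  -- the conjugate of g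
  have hg' : MemLp (fun x => (starRingEnd ℂ) (g x)) 2 μ := by
    refine ⟨(RCLike.continuous_conj.comp_aestronglyMeasurable hg.1), ?_⟩
    rw [eLpNorm_congr_norm_ae (Filter.Eventually.of_forall fun x => by
      simp [RCLike.norm_conj] : ∀ᵐ x ∂μ, ‖(starRingEnd ℂ) (g x)‖ = ‖g x‖)]
    exact hg.2
  set G' : Lp ℂ 2 μ := hg'.toLp _ with hG'
  -- inner products
  have hinnVV : ∀ j k : ℤ, ⟪V j, V k⟫_ℂ =
      ∫ x, (starRingEnd ℂ) (K x (tk j)) * K x (tk k) ∂μ := fun j k =>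
    inner_toLp_eq μ _ _ _ _
  -- norm of V k
  have hinner_self : ∀ k : ℤ, ⟪V k, V k⟫_ℂ =
      ((∫ x in a..b, ‖K x (tk k)‖ ^ 2 : ℝ) : ℂ) := by
    intro k
    rw [hinnVV, hintR]
    calc ∫ x, (starRingEnd ℂ) (K x (tk k)) * K x (tk k) ∂μ
        = ∫ x, ((‖K x (tk k)‖ ^ 2 : ℝ) : ℂ) ∂μ := by
          apply integral_congr_ae
          filter_upwards with x
          rw [RCLike.conj_mul]
          norm_num
      _ = _ := integral_ofReal
  have hnormV_sq : ∀ k : ℤ, (‖V k‖ : ℝ) ^ 2 = (∫ x in a..b, ‖K x (tk k)‖ ^ 2 : ℝ) := by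
    intro k
    have h1 := inner_self_eq_norm_sq (𝕜 := ℂ) (V k)
    rw [hinner_self k] at h1
    simpa using h1.symm
  have hnormV : ∀ k : ℤ, ((‖V k‖ : ℝ) : ℂ) ^ 2 =
      ((∫ x in a..b, ‖K x (tk k)‖ ^ 2 : ℝ) : ℂ) := by
    intro k
    exact_mod_cast congrArg (Complex.ofReal) (hnormV_sq k)
  have hnormV_pos : ∀ k : ℤ, (0:ℝ) < ‖V k‖ := by
    intro k
    nlinarith [hnz k, norm_nonneg (V k), hnormV_sq k]
  have hVne : ∀ k : ℤ, ((‖V k‖ : ℝ) : ℂ) ≠ 0 := fun k => by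
    exact_mod_cast (hnormV_pos k).ne'
  -- normalized family
  set w : ℤ → Lp ℂ 2 μ := fun k => ((‖V k‖ : ℝ) : ℂ)⁻¹ • V k with hw
  have horthV : ∀ i j : ℤ, i ≠ j → ⟪V i, V j⟫_ℂ = 0 := by
    intro i j hij
    rw [hinnVV]
    have := horth j i (Ne.symm hij)
    rw [hint] at this
    rw [← this]
    apply integral_congr_ae
    filter_upwards with x
    ring
  have hwon : Orthonormal ℂ w := by
    rw [orthonormal_iff_ite]
    intro i j
    simp only [hw, inner_smul_left, inner_smul_right, map_inv₀, Complex.conj_ofReal]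
    by_cases hij : i = j
    · subst hij
      rw [hinner_self i, ← hnormV i, if_pos rfl]
      have hne := hVne i
      field_simp
    · rw [horthV i j hij, if_neg hij]
      ring
  -- completeness
  have hsp : (Submodule.span ℂ (Set.range w))ᗮ = ⊥ := by
    rw [Submodule.eq_bot_iff]
    intro x hx
    have hxw : ∀ k : ℤ, ⟪V k, x⟫_ℂ = 0 := by
      intro k
      have h1 : ⟪w k, x⟫_ℂ = 0 :=
        (Submodule.mem_orthogonal _ x).mp hx (w k) (Submodule.subset_span ⟨k, rfl⟩)
      rw [hw] at h1
      simp only [inner_smul_left, map_inv₀, Complex.conj_ofReal] at h1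
      rcases mul_eq_zero.mp h1 with h | h
      · exact absurd h (inv_ne_zero (hVne k))
      · exact h
    have hxm : MemLp (fun y => (x : ℝ → ℂ) y) 2 μ := Lp.memLp x
    have hzero : ∀ k : ℤ, ∫ y in a..b, (x : ℝ → ℂ) y * (starRingEnd ℂ) (K y (tk k)) = 0 := by
      intro k
      have h2 : ⟪x, V k⟫_ℂ = 0 := by
        rw [← inner_conj_symm, hxw k, map_zero]
      have h3 : ⟪(hxm.toLp _ : Lp ℂ 2 μ), V k⟫_ℂ = ⟪x, V k⟫_ℂ := by
        congr 1
        exact MeasureTheory.Lp.toLp_coeFn x hxm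
      rw [inner_toLp_eq] at h3
      rw [hint]
      have h4 : ∫ y, (starRingEnd ℂ) ((x : ℝ → ℂ) y) * K y (tk k) ∂μ = 0 := by
        rw [h3, h2]
      have h5 := congrArg (starRingEnd ℂ) h4
      rw [← integral_conj, map_zero] at h5
      rw [← h5]
      apply integral_congr_ae
      filter_upwards with y
      simp [mul_comm]
    have := hcomp _ hxm hzero
    rw [← Lp.eq_zero_iff_ae_eq_zero] at this
    simpa using this
  -- the Hilbert basis
  set B : HilbertBasis ℤ ℂ (Lp ℂ 2 μ) := HilbertBasis.mkOfOrthogonalEqBot hwon hsp with hB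
  have hBcoe : ∀ k : ℤ, B k = w k := fun k => by
    rw [hB, HilbertBasis.coe_mkOfOrthogonalEqBot]
  have hsum := B.hasSum_inner_mul_inner G' Vt
  -- identify the limit
  have hlim : ⟪G', Vt⟫_ℂ = f t := by
    rw [hG', hVt, inner_toLp_eq, hf t, hint]
    apply integral_congr_ae
    filter_upwards with x
    simp [mul_comm]
  -- identify the terms
  have hterm : ∀ k : ℤ, ⟪G', B k⟫_ℂ * ⟪B k, Vt⟫_ℂ =
      f (tk k) * (∫ x in a..b, K x t * (starRingEnd ℂ) (K x (tk k))) /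
        ((∫ x in a..b, ‖K x (tk k)‖ ^ 2 : ℝ) : ℂ) := by
    intro k
    rw [hBcoe k, hw]
    simp only [inner_smul_left, inner_smul_right, map_inv₀, Complex.conj_ofReal]
    have h1 : ⟪G', V k⟫_ℂ = f (tk k) := by
      rw [hG', hV, inner_toLp_eq, hf (tk k), hint]
      apply integral_congr_ae
      filter_upwards with x
      simp [mul_comm]
    have h2 : ⟪V k, Vt⟫_ℂ = ∫ x in a..b, K x t * (starRingEnd ℂ) (K x (tk k)) := by
      rw [hV, hVt, inner_toLp_eq, hint]
      apply integral_congr_ae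
      filter_upwards with x
      ring
    rw [h1, h2, ← hnormV k]
    have hne := hVne k
    rw [eq_div_iff (pow_ne_zero 2 hne)]
    field_simp
    try ring
    try exact Or.inl trivial
  rw [← hlim]
  exact HasSum.congr_fun hsum fun k => (hterm k).symm
end

section
/- Under the perturbation condition D := sup_{k∈ℤ} |t_k - kπ/σ| < π/(4σ) on a sequence of real sampling points, the product G(t) = (t - t₀) ∏_{k=1}^{∞} (1 - t/t_k)(1 - t/t_{-k}) converges locally uniformly on ℂ and defines an entire function whose zero set is exactly {t_k : k ∈ ℤ}. -/
open Filter Finset Topology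

lemma pwl_norm_prod_one_add_le (s : Finset ℕ) (a : ℕ → ℂ) :
    ‖∏ i ∈ s, (1 + a i)‖ ≤ ∏ i ∈ s, (1 + ‖a i‖) :=
  le_trans (norm_prod_le s _) (Finset.prod_le_prod (fun _ _ => norm_nonneg _)
    (fun i _ => by simpa using norm_add_le (1 : ℂ) (a i)))

lemma pwl_norm_prod_one_add_sub_one_le (s : Finset ℕ) (a : ℕ → ℂ) :
    ‖∏ i ∈ s, (1 + a i) - 1‖ ≤ ∏ i ∈ s, (1 + ‖a i‖) - 1 := by
  induction s using Finset.cons_induction with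
  | empty => simp
  | cons i s hi ih =>
    rw [Finset.prod_cons, Finset.prod_cons]
    have h1 : (1 + a i) * ∏ j ∈ s, (1 + a j) - 1
        = (∏ j ∈ s, (1 + a j) - 1) + a i * ∏ j ∈ s, (1 + a j) := by ring
    rw [h1]
    calc ‖(∏ j ∈ s, (1 + a j) - 1) + a i * ∏ j ∈ s, (1 + a j)‖
        ≤ ‖∏ j ∈ s, (1 + a j) - 1‖ + ‖a i‖ * ‖∏ j ∈ s, (1 + a j)‖ := by
          simpa [norm_mul] using norm_add_le (∏ j ∈ s, (1 + a j) - 1)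
            (a i * ∏ j ∈ s, (1 + a j))
      _ ≤ (∏ j ∈ s, (1 + ‖a j‖) - 1) + ‖a i‖ * ∏ j ∈ s, (1 + ‖a j‖) :=
          add_le_add ih (mul_le_mul_of_nonneg_left (pwl_norm_prod_one_add_le s a)
            (norm_nonneg _))
      _ = (1 + ‖a i‖) * ∏ j ∈ s, (1 + ‖a j‖) - 1 := by ring

lemma pwl_prod_one_add_le_exp (s : Finset ℕ) (b : ℕ → ℝ) (hb : ∀ i ∈ s, 0 ≤ b i) :
    ∏ i ∈ s, (1 + b i) ≤ Real.exp (∑ i ∈ s, b i) := by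
  rw [Real.exp_sum]
  exact Finset.prod_le_prod (fun i hi => by have := hb i hi; positivity)
    (fun i _ => by rw [add_comm]; exact Real.add_one_le_exp (b i))

lemma pwl_norm_prod_le_exp (s : Finset ℕ) (a : ℕ → ℂ) (b : ℕ → ℝ)
    (hab : ∀ i ∈ s, ‖a i‖ ≤ b i) :
    ‖∏ i ∈ s, (1 + a i)‖ ≤ Real.exp (∑ i ∈ s, b i) :=
  le_trans (pwl_norm_prod_one_add_le s a) <| le_trans
    (Finset.prod_le_prod (fun _ _ => by positivity)
      (fun i hi => by linarith [hab i hi]))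
    (pwl_prod_one_add_le_exp s b (fun i hi => le_trans (norm_nonneg _) (hab i hi)))

lemma pwl_norm_prod_sub_one_le_exp (s : Finset ℕ) (a : ℕ → ℂ) (b : ℕ → ℝ)
    (hab : ∀ i ∈ s, ‖a i‖ ≤ b i) :
    ‖∏ i ∈ s, (1 + a i) - 1‖ ≤ Real.exp (∑ i ∈ s, b i) - 1 := by
  refine le_trans (pwl_norm_prod_one_add_sub_one_le s a) ?_
  have h1 : ∏ i ∈ s, (1 + ‖a i‖) ≤ Real.exp (∑ i ∈ s, b i) :=
    le_trans (Finset.prod_le_prod (fun _ _ => by positivity)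
      (fun i hi => by linarith [hab i hi]))
      (pwl_prod_one_add_le_exp s b (fun i hi => le_trans (norm_nonneg _) (hab i hi)))
  linarith

lemma pwl_exp_half_lt_two : Real.exp (1/2) < 2 := by
  have h1 : Real.exp (1/2) * Real.exp (1/2) = Real.exp 1 := by
    rw [← Real.exp_add]; norm_num
  nlinarith [Real.exp_pos (1/2 : ℝ), Real.exp_one_lt_d9]

lemma pwl_diff_prod (s : Finset ℕ) (g : ℕ → ℂ → ℂ) (hg : ∀ i, Differentiable ℂ (g i)) :
    Differentiable ℂ (fun z => ∏ i ∈ s, g i z) := by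
  induction s using Finset.cons_induction with
  | empty => simp only [Finset.prod_empty]; exact differentiable_const (1 : ℂ)
  | cons i s hi ih =>
    simpa only [Finset.prod_cons] using (hg i).fun_mul ih

/-- Under the Paley–Wiener–Levinson perturbation condition
`sup_k |t_k - kπ/σ| < π/(4σ)`, the product
`G(t) = (t - t₀) ∏_{k≥1} (1 - t/t_k)(1 - t/t_{-k})` converges locally
uniformly on `ℂ` to an entire function whose zero set is exactly `{t_k}`. -/
theorem pwl_product_entire
    (σ : ℝ) (hσ : 0 < σ) (t : ℤ → ℝ)
    (hinj : Function.Injective t)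
    (hnz : ∀ k : ℤ, k ≠ 0 → t k ≠ 0)
    (hD : ∃ D : ℝ, D < Real.pi / (4 * σ) ∧
      ∀ k : ℤ, |t k - k * Real.pi / σ| ≤ D) :
    ∃ G : ℂ → ℂ,
      (∀ K : Set ℂ, IsCompact K →
        TendstoUniformlyOn
          (fun (N : ℕ) (z : ℂ) =>
            (z - (t 0 : ℂ)) * ∏ k ∈ Finset.Icc 1 N,
              ((1 - z / (t (k : ℤ) : ℂ)) * (1 - z / (t (-(k : ℤ)) : ℂ))))
          G atTop K) ∧
      Differentiable ℂ G ∧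
      (∀ z : ℂ, G z = 0 ↔ ∃ k : ℤ, (t k : ℂ) = z) := by
  obtain ⟨D, hD1, hD2⟩ := hD
  have hπ : (0:ℝ) < Real.pi := Real.pi_pos
  have hD0 : 0 ≤ D := by
    have h := hD2 0
    simp only [Int.cast_zero, zero_mul, zero_div, sub_zero] at h
    exact le_trans (abs_nonneg _) h
  set q : ℝ := Real.pi / (4 * σ) with hqdef
  have hq : 0 < q := by rw [hqdef]; positivity
  have hπσ : Real.pi / σ = 4 * q := by rw [hqdef]; field_simp
  -- lower bound on |t j|
  have hlow : ∀ j : ℤ, j ≠ 0 → 3 * q * |(j:ℝ)| ≤ |t j| := by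
    intro j hj
    have h1 : (1:ℝ) ≤ |(j:ℝ)| := by
      have := Int.one_le_abs hj
      exact_mod_cast this
    have h3 : |(j:ℝ) * Real.pi / σ| - |t j| ≤ D :=
      calc |(j:ℝ) * Real.pi / σ| - |t j| ≤ |(j:ℝ) * Real.pi / σ - t j| :=
            abs_sub_abs_le_abs_sub _ _
        _ = |t j - (j:ℝ) * Real.pi / σ| := abs_sub_comm _ _
        _ ≤ D := hD2 j
    have h4 : |(j:ℝ) * Real.pi / σ| = |(j:ℝ)| * (4 * q) := by
      rw [abs_div, abs_mul, abs_of_pos hπ, abs_of_pos hσ, mul_div_assoc, hπσ]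
    rw [h4] at h3
    nlinarith [mul_le_mul_of_nonneg_left h1 hq.le]
  -- bound on |t k + t (-k)|
  have hsum2 : ∀ k : ℤ, |t k + t (-k)| ≤ 2 * D := by
    intro k
    have h1 := hD2 k
    have h2 := hD2 (-k)
    have h3 : t k + t (-k) = (t k - (k:ℝ) * Real.pi / σ)
        + (t (-k) - ((-k : ℤ) : ℝ) * Real.pi / σ) := by push_cast; ring
    rw [h3]
    exact le_trans (abs_add_le _ _) (by linarith)
  -- the bounding sequence
  set b : ℝ → ℕ → ℝ := fun R k => (R^2 + 2*D*R) / ((3*q)^2 * (k:ℝ)^2) with hbdef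
  have hb0 : ∀ R : ℝ, 0 ≤ R → ∀ k, 0 ≤ b R k := by
    intro R hR k
    simp only [hbdef]
    exact div_nonneg (by nlinarith) (by positivity)
  have hbsum : ∀ R : ℝ, Summable (b R) := by
    intro R
    have h1 : Summable (fun k : ℕ => (R^2 + 2*D*R)/(3*q)^2 * (1/(k:ℝ)^2)) :=
      (Real.summable_one_div_nat_pow.mpr one_lt_two).mul_left _
    refine h1.congr fun k => ?_
    simp only [hbdef]
    rw [div_mul_div_comm, mul_one]
  -- the factors
  set a : ℕ → ℂ → ℂ := fun k z =>
    (1 - z / (t (k : ℤ) : ℂ)) * (1 - z / (t (-(k : ℤ)) : ℂ)) - 1 with hadef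
  have hanorm : ∀ k : ℕ, 1 ≤ k → ∀ R : ℝ, 0 ≤ R → ∀ z : ℂ, ‖z‖ ≤ R →
      ‖a k z‖ ≤ b R k := by
    intro k hk R hR z hz
    have hkZ : (k:ℤ) ≠ 0 := Int.natCast_ne_zero.mpr (Nat.one_le_iff_ne_zero.mp hk)
    have hkN : -(k:ℤ) ≠ 0 := neg_ne_zero.mpr hkZ
    have huC : ((t (k:ℤ) : ℝ) : ℂ) ≠ 0 := Complex.ofReal_ne_zero.mpr (hnz _ hkZ)
    have hvC : ((t (-(k:ℤ)) : ℝ) : ℂ) ≠ 0 := Complex.ofReal_ne_zero.mpr (hnz _ hkN)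
    have hlu : 3*q*(k:ℝ) ≤ |t (k:ℤ)| := by
      have h := hlow (k:ℤ) hkZ
      rwa [Int.cast_natCast, abs_of_nonneg (Nat.cast_nonneg k)] at h
    have hlv : 3*q*(k:ℝ) ≤ |t (-(k:ℤ))| := by
      have h := hlow (-(k:ℤ)) hkN
      rwa [Int.cast_neg, abs_neg, Int.cast_natCast, abs_of_nonneg (Nat.cast_nonneg k)] at h
    have hsk : |t (k:ℤ) + t (-(k:ℤ))| ≤ 2*D := hsum2 (k:ℤ)
    have hexp : a k z = (z^2 - z * (((t (k:ℤ) : ℝ):ℂ) + ((t (-(k:ℤ)) : ℝ):ℂ)))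
        / (((t (k:ℤ) : ℝ):ℂ) * ((t (-(k:ℤ)) : ℝ):ℂ)) := by
      simp only [hadef]
      field_simp
      ring
    rw [hexp, norm_div, norm_mul]
    have hnum : ‖z^2 - z * (((t (k:ℤ) : ℝ):ℂ) + ((t (-(k:ℤ)) : ℝ):ℂ))‖
        ≤ R^2 + 2*D*R := by
      have h2 : ‖((t (k:ℤ) : ℝ):ℂ) + ((t (-(k:ℤ)) : ℝ):ℂ)‖ = |t (k:ℤ) + t (-(k:ℤ))| := by
        rw [← Complex.ofReal_add, Complex.norm_real, Real.norm_eq_abs]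
      calc ‖z^2 - z * (((t (k:ℤ) : ℝ):ℂ) + ((t (-(k:ℤ)) : ℝ):ℂ))‖
          ≤ ‖z^2‖ + ‖z * (((t (k:ℤ) : ℝ):ℂ) + ((t (-(k:ℤ)) : ℝ):ℂ))‖ := norm_sub_le _ _
        _ = ‖z‖^2 + ‖z‖ * |t (k:ℤ) + t (-(k:ℤ))| := by rw [norm_pow, norm_mul, h2]
        _ ≤ R^2 + 2*D*R := by
            nlinarith [norm_nonneg z, abs_nonneg (t (k:ℤ) + t (-(k:ℤ)))]
    have hden : (3*q)^2 * (k:ℝ)^2 ≤ ‖((t (k:ℤ) : ℝ):ℂ)‖ * ‖((t (-(k:ℤ)) : ℝ):ℂ)‖ := by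
      rw [Complex.norm_real, Complex.norm_real, Real.norm_eq_abs, Real.norm_eq_abs]
      calc (3*q)^2 * (k:ℝ)^2 = (3*q*(k:ℝ)) * (3*q*(k:ℝ)) := by ring
        _ ≤ |t (k:ℤ)| * |t (-(k:ℤ))| :=
            mul_le_mul hlu hlv (by positivity) (abs_nonneg _)
    have hkpos : (0:ℝ) < (k:ℝ) := by exact_mod_cast hk
    have hdpos : (0:ℝ) < (3*q)^2 * (k:ℝ)^2 := by positivity
    simp only [hbdef]
    exact div_le_div₀ (by nlinarith) hnum hdpos hden
  -- the partial products
  set P : ℕ → ℂ → ℂ := fun (N : ℕ) (z : ℂ) =>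
    (z - (t 0 : ℂ)) * ∏ k ∈ Finset.Icc 1 N,
      ((1 - z / (t (k : ℤ) : ℂ)) * (1 - z / (t (-(k : ℤ)) : ℂ))) with hPdef
  have hP1 : ∀ N z, P N z = (z - (t 0 : ℂ)) * ∏ k ∈ Finset.Ioc 0 N, (1 + a k z) := by
    intro N z
    simp only [hPdef, hadef]
    rw [show Finset.Icc 1 N = Finset.Ioc 0 N from Finset.Icc_add_one_left_eq_Ioc 0 N]
    congr 1
    exact Finset.prod_congr rfl (fun k _ => by ring)
  -- tail sums
  set S : ℝ → ℝ := fun R => ∑' j : ℕ, b R (1+j) with hSdef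
  have hBsum : ∀ R : ℝ, Summable (fun j : ℕ => b R (1+j)) :=
    fun R => (hbsum R).comp_injective (add_right_injective 1)
  have hpart : ∀ (R : ℝ) (M : ℕ),
      ∑ k ∈ Finset.Ioc 0 M, b R k = ∑ j ∈ Finset.range M, b R (1+j) := by
    intro R M
    rw [show Finset.Ioc 0 M = Finset.Ico 1 (M+1) by
      rw [Finset.Ico_add_one_right_eq_Icc]; exact (Finset.Icc_add_one_left_eq_Ioc 0 M).symm]
    rw [Finset.sum_Ico_eq_sum_range]
    simp
  have hsumle : ∀ R : ℝ, 0 ≤ R → ∀ M, ∑ k ∈ Finset.Ioc 0 M, b R k ≤ S R := by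
    intro R hR M
    rw [hpart, hSdef]
    exact Summable.sum_le_tsum _ (fun j _ => hb0 R hR _) (hBsum R)
  have hτlim : ∀ R : ℝ,
      Tendsto (fun M => S R - ∑ k ∈ Finset.Ioc 0 M, b R k) atTop (𝓝 0) := by
    intro R
    have h1 : Tendsto (fun M => ∑ j ∈ Finset.range M, b R (1+j)) atTop (𝓝 (S R)) :=
      (hBsum R).hasSum.tendsto_sum_nat
    have h2 := (tendsto_const_nhds : Tendsto (fun _ : ℕ => S R) atTop (𝓝 (S R))).sub h1
    rw [sub_self] at h2
    simpa only [hpart R] using h2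
  have hIocsub : ∀ R : ℝ, 0 ≤ R → ∀ M N : ℕ, M ≤ N →
      ∑ k ∈ Finset.Ioc M N, b R k ≤ S R - ∑ k ∈ Finset.Ioc 0 M, b R k := by
    intro R hR M N hMN
    have h1 := Finset.sum_Ioc_consecutive (b R) (Nat.zero_le M) hMN
    have h2 := hsumle R hR N
    linarith
  -- central estimate
  have hest : ∀ R : ℝ, 0 ≤ R → ∀ z : ℂ, ‖z‖ ≤ R → ∀ M N : ℕ, M ≤ N →
      ‖P N z - P M z‖ ≤ ‖P M z‖ *
        (Real.exp (S R - ∑ k ∈ Finset.Ioc 0 M, b R k) - 1) := by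
    intro R hR z hz M N hMN
    have habk : ∀ k ∈ Finset.Ioc M N, ‖a k z‖ ≤ b R k := fun k hk =>
      hanorm k (Nat.succ_le_of_lt (lt_of_le_of_lt (Nat.zero_le M)
        (Finset.mem_Ioc.mp hk).1)) R hR z hz
    have hsplit : P N z = P M z * ∏ k ∈ Finset.Ioc M N, (1 + a k z) := by
      rw [hP1, hP1, ← Finset.prod_Ioc_consecutive _ (Nat.zero_le M) hMN]
      ring
    calc ‖P N z - P M z‖
        = ‖P M z‖ * ‖∏ k ∈ Finset.Ioc M N, (1 + a k z) - 1‖ := by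
          rw [hsplit, show P M z * ∏ k ∈ Finset.Ioc M N, (1 + a k z) - P M z
            = P M z * (∏ k ∈ Finset.Ioc M N, (1 + a k z) - 1) by ring, norm_mul]
      _ ≤ ‖P M z‖ * (Real.exp (∑ k ∈ Finset.Ioc M N, b R k) - 1) :=
          mul_le_mul_of_nonneg_left
            (pwl_norm_prod_sub_one_le_exp _ _ _ habk) (norm_nonneg _)
      _ ≤ ‖P M z‖ * (Real.exp (S R - ∑ k ∈ Finset.Ioc 0 M, b R k) - 1) :=
          mul_le_mul_of_nonneg_left
            (sub_le_sub_right (Real.exp_le_exp.mpr (hIocsub R hR M N hMN)) 1)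
            (norm_nonneg _)
  have hPbound : ∀ R : ℝ, 0 ≤ R → ∀ z : ℂ, ‖z‖ ≤ R → ∀ M : ℕ,
      ‖P M z‖ ≤ (R + |t 0|) * Real.exp (S R) := by
    intro R hR z hz M
    rw [hP1, norm_mul]
    have h1 : ‖z - (t 0 : ℂ)‖ ≤ R + |t 0| := by
      refine le_trans (norm_sub_le _ _) ?_
      rw [Complex.norm_real, Real.norm_eq_abs]
      linarith
    have h2 : ‖∏ k ∈ Finset.Ioc 0 M, (1 + a k z)‖
        ≤ Real.exp (∑ k ∈ Finset.Ioc 0 M, b R k) :=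
      pwl_norm_prod_le_exp _ _ _ (fun k hk =>
        hanorm k (Finset.mem_Ioc.mp hk).1 R hR z hz)
    have h3 : Real.exp (∑ k ∈ Finset.Ioc 0 M, b R k) ≤ Real.exp (S R) :=
      Real.exp_le_exp.mpr (hsumle R hR M)
    exact mul_le_mul h1 (le_trans h2 h3) (norm_nonneg _) (by positivity)
  -- uniform Cauchy property
  have hUC : ∀ K : Set ℂ, IsCompact K → UniformCauchySeqOn P atTop K := by
    intro K hK
    rw [Metric.uniformCauchySeqOn_iff]
    intro ε hε
    obtain ⟨R₀, hR₀⟩ := hK.isBounded.exists_norm_le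
    set R : ℝ := max R₀ 0 with hRdef
    have hR : 0 ≤ R := le_max_right _ _
    have hzR : ∀ z ∈ K, ‖z‖ ≤ R := fun z hz => le_trans (hR₀ z hz) (le_max_left _ _)
    have hlim : Tendsto (fun M => ((R + |t 0|) * Real.exp (S R)) *
        (Real.exp (S R - ∑ k ∈ Finset.Ioc 0 M, b R k) - 1)) atTop (𝓝 0) := by
      have h1 := hτlim R
      have h2 : Tendsto (fun M => Real.exp
          (S R - ∑ k ∈ Finset.Ioc 0 M, b R k) - 1) atTop (𝓝 0) := by
        have h3 := (Real.continuous_exp.tendsto 0).comp h1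
        have h4 := h3.sub_const 1
        simpa using h4
      simpa using h2.const_mul ((R + |t 0|) * Real.exp (S R))
    have hev : ∀ᶠ M in atTop, ((R + |t 0|) * Real.exp (S R)) *
        (Real.exp (S R - ∑ k ∈ Finset.Ioc 0 M, b R k) - 1) < ε :=
      hlim.eventually (gt_mem_nhds hε)
    obtain ⟨M₀, hM₀⟩ := eventually_atTop.mp hev
    refine ⟨M₀, fun m hm n hn z hz => ?_⟩
    have key : ∀ p r : ℕ, M₀ ≤ p → p ≤ r → dist (P p z) (P r z) < ε := by
      intro p r hp hpr
      rw [dist_eq_norm, norm_sub_rev]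
      have h5 := hest R hR z (hzR z hz) p r hpr
      have h6 := hPbound R hR z (hzR z hz) p
      have h7 : (1:ℝ) ≤ Real.exp (S R - ∑ k ∈ Finset.Ioc 0 p, b R k) :=
        Real.one_le_exp (by linarith [hsumle R hR p])
      calc ‖P r z - P p z‖
          ≤ ‖P p z‖ * (Real.exp (S R - ∑ k ∈ Finset.Ioc 0 p, b R k) - 1) := h5
        _ ≤ ((R + |t 0|) * Real.exp (S R)) *
            (Real.exp (S R - ∑ k ∈ Finset.Ioc 0 p, b R k) - 1) :=
            mul_le_mul_of_nonneg_right h6 (by linarith)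
        _ < ε := hM₀ p hp
    rcases le_total m n with h | h
    · exact key m n hm h
    · rw [dist_comm]; exact key n m hn h
  -- pointwise limit
  have hCauchy : ∀ z : ℂ, CauchySeq fun N => P N z := by
    intro z
    have h := hUC {z} isCompact_singleton
    rw [Metric.uniformCauchySeqOn_iff] at h
    rw [Metric.cauchySeq_iff]
    intro ε hε
    obtain ⟨N, hN⟩ := h ε hε
    exact ⟨N, fun m hm n hn => hN m hm n hn z rfl⟩
  set G : ℂ → ℂ := fun z => limUnder atTop fun N => P N z with hGdef
  have hG : ∀ z, Tendsto (fun N => P N z) atTop (𝓝 (G z)) :=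
    fun z => (hCauchy z).tendsto_limUnder
  have htu : ∀ K : Set ℂ, IsCompact K → TendstoUniformlyOn P G atTop K :=
    fun K hK => (hUC K hK).tendstoUniformlyOn_of_tendsto fun z _ => hG z
  -- differentiability
  have hPdiff : ∀ N, Differentiable ℂ (P N) := by
    intro N
    simp only [hPdef]
    refine (differentiable_id.sub_const _).mul (pwl_diff_prod _ _ fun i => ?_)
    exact ((differentiable_const _).sub (differentiable_id.div_const _)).mul
      ((differentiable_const _).sub (differentiable_id.div_const _))
  have hGdiff : Differentiable ℂ G := by
    have hloc : TendstoLocallyUniformlyOn P G atTop Set.univ :=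
      (tendstoLocallyUniformlyOn_iff_forall_isCompact isOpen_univ).mpr
        fun K _ hK => htu K hK
    have h := hloc.differentiableOn
      (Filter.Eventually.of_forall fun N => (hPdiff N).differentiableOn) isOpen_univ
    rwa [← differentiableOn_univ]
  -- zero set
  have hzero : ∀ z : ℂ, G z = 0 ↔ ∃ k : ℤ, (t k : ℂ) = z := by
    intro z
    constructor
    · intro hGz
      by_contra hne
      push_neg at hne
      have hR : (0:ℝ) ≤ ‖z‖ := norm_nonneg z
      obtain ⟨M, hM⟩ := ((hτlim ‖z‖).eventually
        (gt_mem_nhds (by norm_num : (0:ℝ) < 1/2))).exists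
      have hPM : P M z ≠ 0 := by
        simp only [hPdef]
        apply mul_ne_zero
        · rw [sub_ne_zero]
          exact fun hc => hne 0 hc.symm
        · rw [Finset.prod_ne_zero_iff]
          intro k hk
          have hk1 : 1 ≤ k := (Finset.mem_Icc.mp hk).1
          have hkZ : (k:ℤ) ≠ 0 := Int.natCast_ne_zero.mpr (Nat.one_le_iff_ne_zero.mp hk1)
          have hkN : -(k:ℤ) ≠ 0 := neg_ne_zero.mpr hkZ
          have huC : ((t (k:ℤ) : ℝ) : ℂ) ≠ 0 := Complex.ofReal_ne_zero.mpr (hnz _ hkZ)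
          have hvC : ((t (-(k:ℤ)) : ℝ) : ℂ) ≠ 0 := Complex.ofReal_ne_zero.mpr (hnz _ hkN)
          apply mul_ne_zero
          · intro hc
            rw [sub_eq_zero] at hc
            exact hne (k:ℤ) (by field_simp at hc; exact hc)
          · intro hc
            rw [sub_eq_zero] at hc
            exact hne (-(k:ℤ)) (by field_simp at hc; exact hc)
      have hlb : ∀ N, M ≤ N → ‖P M z‖ * (2 - Real.exp (1/2)) ≤ ‖P N z‖ := by
        intro N hN
        have h1 := hest ‖z‖ hR z le_rfl M N hN
        have h2 : Real.exp (S ‖z‖ - ∑ k ∈ Finset.Ioc 0 M, b ‖z‖ k)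
            ≤ Real.exp (1/2) := Real.exp_le_exp.mpr hM.le
        have h3 : ‖P M z‖ - ‖P N z‖ ≤ ‖P N z - P M z‖ := by
          rw [norm_sub_rev]
          exact norm_sub_norm_le _ _
        nlinarith [norm_nonneg (P M z), norm_nonneg (P N z)]
      have hpos : 0 < ‖P M z‖ * (2 - Real.exp (1/2)) :=
        mul_pos (norm_pos_iff.mpr hPM) (by linarith [pwl_exp_half_lt_two])
      have hle : ‖P M z‖ * (2 - Real.exp (1/2)) ≤ ‖G z‖ :=
        ge_of_tendsto (hG z).norm (eventually_atTop.mpr ⟨M, hlb⟩)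
      rw [hGz, norm_zero] at hle
      linarith
    · rintro ⟨k, hk⟩
      rcases eq_or_ne k 0 with rfl | hk0
      · have hzero' : (fun N => P N z) = fun _ => (0:ℂ) := by
          funext N
          simp only [hPdef]
          rw [← hk, sub_self, zero_mul]
        have h0 : Tendsto (fun N => P N z) atTop (𝓝 0) := by
          rw [hzero']; exact tendsto_const_nhds
        exact tendsto_nhds_unique (hG z) h0
      · set n : ℕ := k.natAbs with hndef
        have hn1 : 1 ≤ n := Int.natAbs_pos.mpr hk0
        have hev : ∀ N, n ≤ N → P N z = 0 := by
          intro N hN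
          simp only [hPdef]
          apply mul_eq_zero_of_right
          apply Finset.prod_eq_zero (Finset.mem_Icc.mpr ⟨hn1, hN⟩)
          rcases Int.natAbs_eq k with hcase | hcase
          · have ht : ((t (n:ℤ) : ℝ) : ℂ) = z := by rw [hndef, ← hcase]; exact hk
            have hu : ((t (n:ℤ) : ℝ) : ℂ) ≠ 0 :=
              Complex.ofReal_ne_zero.mpr (hnz _ (by rw [hndef, ← hcase]; exact hk0))
            rw [← ht, div_self hu, sub_self, zero_mul]
          · have hnk : -(n:ℤ) = k := by omega
            have ht : ((t (-(n:ℤ)) : ℝ) : ℂ) = z := by rw [hnk]; exact hk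
            have hu : ((t (-(n:ℤ)) : ℝ) : ℂ) ≠ 0 :=
              Complex.ofReal_ne_zero.mpr (hnz _ (by rw [hnk]; exact hk0))
            rw [← ht, div_self hu, sub_self, mul_zero]
        have h0 : Tendsto (fun N => P N z) atTop (𝓝 0) := by
          refine Tendsto.congr' ?_ tendsto_const_nhds
          filter_upwards [eventually_ge_atTop n] with N hN
          exact (hev N hN).symm
        exact tendsto_nhds_unique (hG z) h0
  exact ⟨G, fun K hK => htu K hK, hGdiff, hzero⟩
end
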